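/- Let K = 𝔽_q(θ), v ∈ 𝔽_q[t] monic irreducible of degree d, K_v(θ) the completion of K at v(θ). Let Φ ∈ K[t] be a polynomial with Φ ∈ (K(t)_v)^× and Φ = c(t−θ)^s for some c ∈ K^× and s ∈ ℕ, and let ψ ∈ K^sep[t]_v satisfy the Frobenius equation σ(ψ) = Φ·ψ, where σ is the partial Frobenius Σa_i t^i ↦ Σ a_i^q t^i. Suppose ψ(θ) (obtained by substituting θ for t componentwise in ∏_l K^sep[[t−λ_l]], via fixed embeddings into the completions) converges and equals 0. Then ψ = 0. -/

import Mathlib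

open Polynomial

/-!
STATEMENT 17 (rank-one v-adic ABP criterion): Let K = 𝔽_q(θ), v ∈ 𝔽_q[t] monic
irreducible of degree d, with v = ∏_{l ∈ ℤ/d} (t − λ_l) over 𝔽_{q^d} ⊆ K^sep, where
λ_l^q = λ_{l+1}.  Let Φ ∈ K[t] with Φ = c(t−θ)^s for some c ∈ K^× and s ∈ ℕ, and let
ψ = (Σ_i a_{l,i}(t−λ_l)^i)_l ∈ K^sep[t]_v ≅ ∏_l K^sep[[t−λ_l]] satisfy σ(ψ) = Φ·ψ,
where σ is the partial Frobenius Σ a_i t^i ↦ Σ a_i^q t^i, i.e.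
a_{l−1,i}^q = Σ_{j≤i} (taylor expansion of Φ at λ_l)_j · a_{l,i−j}.  Suppose that for each
l the series ψ_l(θ) = Σ_i a_{l,i}(θ−λ_l)^i converges to 0 in the completion ℂ_l of an
algebraic closure of K·𝔽_{q^d} at the place (θ−λ_l) (via fixed embeddings).  Then ψ = 0.
-/

noncomputable section

variable (Fq : Type) [Field Fq] [Fintype Fq]

/-- `K = 𝔽_q(θ)`, the rational function field. -/
abbrev Krat := FractionRing (Polynomial Fq)

/-- `θ`, the image of the variable in `K = 𝔽_q(θ)`. -/
def theta : Krat Fq := algebraMap (Polynomial Fq) (Krat Fq) Polynomial.X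

section AuxValued

variable {Cv : Type*} [Field Cv] [Valued Cv NNReal]

/-- A `Valued` field (with values in `ℝ≥0`) is a nonarchimedean additive group. -/
lemma aux_nonarch : NonarchimedeanAddGroup Cv where
  is_nonarchimedean := by
    intro U hU
    rcases Valued.mem_nhds_zero.mp hU with ⟨γ, hγ⟩
    refine ⟨⟨Valued.v.restrict.ltAddSubgroup γ, ?_⟩, hγ⟩
    exact Valued.isOpen_ball Cv γ.1

/-- In a complete valued field, a sequence tending to zero is summable. -/
lemma aux_summable [CompleteSpace Cv] {f : ℕ → Cv}
    (hf : Filter.Tendsto f Filter.atTop (nhds 0)) : Summable f := by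
  have := @aux_nonarch Cv _ _
  exact NonarchimedeanAddGroup.summable_of_tendsto_cofinite_zero
    (Nat.cofinite_eq_atTop ▸ hf)

/-- Convergence to `0` can be checked on valuations. -/
lemma aux_tendsto_iff {f : ℕ → Cv} :
    Filter.Tendsto f Filter.atTop (nhds 0) ↔
      Filter.Tendsto (fun i => Valued.v (f i) : ℕ → NNReal) Filter.atTop (nhds 0) := by
  constructor
  · intro h
    refine tendsto_order.2 ⟨fun b hb => absurd hb (by simp), fun b hb => ?_⟩
    have hmem : {x : Cv | Valued.v x < b} ∈ nhds (0 : Cv) :=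
      by
        by_cases hy : ∃ y : Cv, y ≠ 0 ∧ Valued.v y < 1
        · obtain ⟨y, hy0, hy1⟩ := hy
          obtain ⟨n, hn⟩ :=
            ((NNReal.tendsto_pow_atTop_nhds_zero_of_lt_one hy1).eventually_lt_const hb).exists
          rw [Valued.mem_nhds_zero]
          refine ⟨Units.mk0 (Valued.v.restrict (y ^ n)) (by simp [hy0]), fun x hx => ?_⟩
          simp only [Set.mem_setOf_eq, Units.val_mk0, Valuation.restrict_lt_iff] at hx
          show Valued.v x < b
          rw [map_pow] at hx
          exact hx.trans hn
        · push_neg at hy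
          rw [Valued.mem_nhds_zero]
          refine ⟨1, fun x hx => ?_⟩
          simp only [Set.mem_setOf_eq, Units.val_one, Valuation.restrict_lt_one_iff] at hx
          show Valued.v x < b
          by_cases hx0 : x = 0
          · simp [hx0, hb]
          · exact absurd hx (not_lt.mpr (hy x hx0))
    have := h hmem
    rw [Filter.mem_map] at this
    exact this
  · intro h
    rw [(Valued.hasBasis_nhds_zero Cv NNReal).tendsto_right_iff]
    intro γ _
    have hγ : (0 : NNReal) < MonoidWithZeroHom.ValueGroup₀.embedding γ.1 := by
      have := MonoidWithZeroHom.ValueGroup₀.embedding_strictMono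
        (f := MonoidWithZeroHom.ofClass (Valued.v : Valuation Cv NNReal)) (Units.zero_lt γ)
      simpa using this
    exact (h.eventually_lt_const hγ).mono fun i hi => (Valuation.restrict_lt_iff_lt_embedding _).mpr hi
/-- A valuation bound on all terms gives a bound on the sum. -/
lemma aux_val_le_of_hasSum {g : ℕ → Cv} {S : Cv} {B : NNReal} (h : HasSum g S)
    (hB : ∀ i, Valued.v (g i) ≤ B) : Valued.v S ≤ B := by
  have hclosed : IsClosed {x : Cv | Valued.v x ≤ B} := by
    rw [← isOpen_compl_iff, isOpen_iff_mem_nhds]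
    intro x hx
    simp only [Set.mem_compl_iff, Set.mem_setOf_eq, not_le] at hx
    have hx0 : Valued.v x ≠ 0 := (lt_of_le_of_lt zero_le hx).ne'
    rw [Valued.mem_nhds]
    refine ⟨Units.mk0 (Valued.v.restrict x) (by simpa using hx0), fun y hy => ?_⟩
    simp only [Set.mem_setOf_eq, Units.val_mk0, Valuation.restrict_lt_iff] at hy
    simp only [Set.mem_compl_iff, Set.mem_setOf_eq, not_le]
    have hvy : Valued.v y = Valued.v x := by
      have := Valuation.map_add_of_distinct_val Valued.v (x := y - x) (y := x) (hy.ne)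
      simpa [max_eq_right hy.le] using this
    rwa [hvy]
  exact hclosed.mem_of_tendsto h (Filter.Eventually.of_forall fun s =>
    Valuation.map_sum_le _ (fun i _ => hB i))

/-- Multiplying a convergent power series by a polynomial. -/
lemma aux_mulpoly (b : ℕ → Cv) (N : ℕ) (hb : ∀ j, N < j → b j = 0)
    (cs : ℕ → Cv) (z : Cv) (T : Cv) (hT : HasSum (fun i => cs i * z ^ i) T) :
    HasSum (fun i => (∑ j ∈ Finset.range (i + 1), b j * cs (i - j)) * z ^ i)
      ((∑ j ∈ Finset.range (N + 1), b j * z ^ j) * T) := by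
  have key : ∀ j : ℕ, HasSum (fun i => if j ≤ i then b j * cs (i - j) * z ^ i else 0)
      (b j * z ^ j * T) := by
    intro j
    have h1 : HasSum (fun i => b j * z ^ j * (cs i * z ^ i)) (b j * z ^ j * T) := hT.mul_left _
    have hinj : Function.Injective (fun i : ℕ => i + j) := add_left_injective j
    have hg : ∀ x ∉ Set.range (fun i : ℕ => i + j),
        (fun i => if j ≤ i then b j * cs (i - j) * z ^ i else 0) x = 0 := by
      intro i hi
      simp only [Set.mem_range, not_exists] at hi
      have : ¬ j ≤ i := fun hle => hi (i - j) (Nat.sub_add_cancel hle)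
      simp only [if_neg this]
    rw [← Function.Injective.hasSum_iff hinj hg]
    refine h1.congr_fun fun i => ?_
    show (if j ≤ i + j then b j * cs (i + j - j) * z ^ (i + j) else 0) = b j * z ^ j * (cs i * z ^ i)
    rw [if_pos (Nat.le_add_left j i), Nat.add_sub_cancel, pow_add]
    ring
  have hsum := hasSum_sum (s := Finset.range (N + 1))
    (f := fun j i => if j ≤ i then b j * cs (i - j) * z ^ i else 0)
    (a := fun j => b j * z ^ j * T) (fun j _ => key j)
  rw [← Finset.sum_mul] at hsum
  refine hsum.congr_fun fun i => ?_
  rw [Finset.sum_mul]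
  set M := max (N + 1) (i + 1) with hM
  have hL : ∑ j ∈ Finset.range (N + 1), (if j ≤ i then b j * cs (i - j) * z ^ i else 0)
      = ∑ j ∈ Finset.range M, (if j ≤ i then b j * cs (i - j) * z ^ i else 0) := by
    refine Finset.sum_subset (Finset.range_subset_range.mpr (le_max_left _ _)) ?_
    intro j _ hj
    rw [Finset.mem_range, not_lt] at hj
    have : b j = 0 := hb j (by omega)
    simp [this]
  have hR : ∑ j ∈ Finset.range (i + 1), b j * cs (i - j) * z ^ i
      = ∑ j ∈ Finset.range M, (if j ≤ i then b j * cs (i - j) * z ^ i else 0) := by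
    rw [← Finset.sum_subset (Finset.range_subset_range.mpr (le_max_right N.succ _))
      (fun j _ hj => by rw [Finset.mem_range, not_lt] at hj; rw [if_neg (by omega)])]
    refine Finset.sum_congr rfl fun j hj => ?_
    rw [Finset.mem_range] at hj
    rw [if_pos (by omega)]
  rw [hL, hR]

/-- Frobenius powers of a convergent sum. -/
lemma aux_frob_hasSum (p : ℕ) [Fact p.Prime] [CharP Cv p] (n : ℕ)
    {f : ℕ → Cv} {S : Cv} (h : HasSum f S) :
    HasSum (fun i => f i ^ p ^ n) (S ^ p ^ n) := by
  let φ : Cv →+ Cv :=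
    { toFun := fun x => x ^ p ^ n
      map_zero' := zero_pow (pow_ne_zero n (Fact.out (p := p.Prime)).ne_zero)
      map_add' := fun x y => add_pow_char_pow x y p n }
  exact h.map φ (continuous_pow (p ^ n))

end AuxValued

set_option maxHeartbeats 4000000 in
theorem stmt17
    (q : ℕ) (hq : q = Fintype.card Fq)
    -- v monic irreducible of degree d
    (v : Polynomial Fq) (hirr : Irreducible v) (hmonic : v.Monic)
    (d : ℕ) [NeZero d] (hd : v.natDegree = d)
    -- a separable closure K^sep of K
    (Ksep : Type) [Field Ksep] [Algebra (Krat Fq) Ksep] [IsSepClosure (Krat Fq) Ksep]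
    -- the roots λ_l of v in K^sep, with λ_l^q = λ_{l+1}
    (lam : ZMod d → Ksep)
    (hfac : v.map ((algebraMap (Krat Fq) Ksep).comp
        ((algebraMap (Polynomial Fq) (Krat Fq)).comp (Polynomial.C))) =
      ∏ l : ZMod d, (Polynomial.X - Polynomial.C (lam l)))
    (hlam : ∀ l : ZMod d, lam l ^ q = lam (l + 1))
    -- Φ ∈ K[t] with Φ = c (t − θ)^s, c ∈ K^×
    (Φ : Polynomial (Krat Fq)) (s : ℕ) (c : Krat Fq) (hc : c ≠ 0)
    (hΦ : Φ = Polynomial.C c * (Polynomial.X - Polynomial.C (theta Fq)) ^ s)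
    -- ψ ∈ K^sep[t]_v = ∏_l K^sep[[t − λ_l]], given by coefficients a_{l,i} = ψ l i
    (ψ : ZMod d → ℕ → Ksep)
    -- the Frobenius equation σ(ψ) = Φ ψ, written out coefficientwise
    (hfrob : ∀ (l : ZMod d) (i : ℕ),
      (ψ (l - 1) i) ^ q =
        ∑ j ∈ Finset.range (i + 1),
          (Polynomial.taylor (lam l) (Φ.map (algebraMap (Krat Fq) Ksep))).coeff j *
            ψ l (i - j))
    -- the completions ℂ_l: complete nonarchimedean valued fields with embeddings of K^sep
    (Cl : ZMod d → Type) [∀ l, Field (Cl l)] [∀ l, Valued (Cl l) NNReal]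
    [∀ l, CompleteSpace (Cl l)]
    (e : ∀ l : ZMod d, Ksep →+* Cl l)
    -- θ − λ_l lies in the open unit disk of ℂ_l (the place (θ − λ_l))
    (hsmall : ∀ l : ZMod d,
      0 < Valued.v (e l (algebraMap (Krat Fq) Ksep (theta Fq)) - e l (lam l)) ∧
      Valued.v (e l (algebraMap (Krat Fq) Ksep (theta Fq)) - e l (lam l)) < 1)
    -- ψ(θ) converges and equals 0
    (hzero : ∀ l : ZMod d,
      HasSum (fun i : ℕ =>
        e l (ψ l i) *
          (e l (algebraMap (Krat Fq) Ksep (theta Fq)) - e l (lam l)) ^ i) 0) :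
    -- then ψ = 0
    ∀ (l : ZMod d) (i : ℕ), ψ l i = 0 := by
  -- characteristic setup
  classical
  set p := ringChar Fq with hpdef
  haveI hFq : CharP Fq p := ringChar.charP Fq
  haveI hpP : Fact p.Prime := ⟨CharP.char_is_prime Fq p⟩
  obtain ⟨k, hkp, hcard⟩ := FiniteField.card Fq p
  have hq' : q = p ^ (k : ℕ) := hq.trans hcard
  have hq2 : 2 ≤ q := by
    rw [hq]; exact Fintype.one_lt_card
  have hq1 : 1 ≤ q := le_trans (by norm_num) hq2
  -- injections and characteristic transfers
  have hinj0 : Function.Injective ((algebraMap (Polynomial Fq) (Krat Fq)).comp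
      (Polynomial.C : Fq →+* Polynomial Fq)) :=
    (IsFractionRing.injective (Polynomial Fq) (Krat Fq)).comp (Polynomial.C_injective)
  have hinjK : Function.Injective (algebraMap (Krat Fq) Ksep) :=
    (algebraMap (Krat Fq) Ksep).injective
  haveI : CharP (Krat Fq) p := charP_of_injective_ringHom hinj0 p
  haveI : CharP Ksep p := charP_of_injective_ringHom hinjK p
  haveI : ExpChar Ksep p := ExpChar.prime hpP.out
  -- the image of θ in Ksep
  set θ' : Ksep := algebraMap (Krat Fq) Ksep (theta Fq) with hθ'
  have hθe : ∀ n : ℕ, 1 ≤ n → θ' ^ q ^ n ≠ θ' := by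
    intro n hn heq
    have hinj : Function.Injective ((algebraMap (Krat Fq) Ksep).comp
        (algebraMap (Polynomial Fq) (Krat Fq))) :=
      hinjK.comp (IsFractionRing.injective (Polynomial Fq) (Krat Fq))
    have h1 : θ' = ((algebraMap (Krat Fq) Ksep).comp
        (algebraMap (Polynomial Fq) (Krat Fq))) Polynomial.X := rfl
    have h2 : ((algebraMap (Krat Fq) Ksep).comp
        (algebraMap (Polynomial Fq) (Krat Fq))) (Polynomial.X ^ q ^ n) =
        ((algebraMap (Krat Fq) Ksep).comp
        (algebraMap (Polynomial Fq) (Krat Fq))) Polynomial.X := by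
      rw [map_pow, ← h1, heq, h1]
    have h3 : (Polynomial.X : Polynomial Fq) ^ q ^ n = Polynomial.X := hinj h2
    have h4 := congrArg Polynomial.natDegree h3
    rw [Polynomial.natDegree_X_pow, Polynomial.natDegree_X] at h4
    have h5 : 2 ^ n ≤ q ^ n := Nat.pow_le_pow_left hq2 n
    have h6 : 2 ^ 1 ≤ 2 ^ n := Nat.pow_le_pow_right (by norm_num) hn
    omega
  -- iterates of the root relation
  have hlam_iter : ∀ (l : ZMod d) (n : ℕ), lam l ^ q ^ n = lam (l + (n : ZMod d)) := by
    intro l n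
    induction n with
    | zero => simp
    | succ n ih =>
      have : q ^ (n + 1) = q ^ n * q := pow_succ q n
      rw [this, pow_mul, ih, hlam]
      push_cast
      ring_nf
  intro L
  -- the Frobenius ring homomorphisms
  set Fr : ℕ → (Ksep →+* Ksep) := fun m => iterateFrobenius Ksep p (k * m) with hFrdef
  have hFr : ∀ (m : ℕ) (x : Ksep), Fr m x = x ^ q ^ m := by
    intro m x
    rw [hFrdef]
    simp only [iterateFrobenius_def]
    rw [hq', ← pow_mul]
  -- the local expansions of Φ
  set Φm : Polynomial Ksep := Φ.map (algebraMap (Krat Fq) Ksep) with hΦm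
  set cm : Ksep := algebraMap (Krat Fq) Ksep c with hcm
  have hcm0 : cm ≠ 0 := by
    intro h
    rw [hcm] at h
    exact hc (hinjK (by rw [map_zero]; exact h))
  have hΦm' : Φm = Polynomial.C cm * (Polynomial.X - Polynomial.C θ') ^ s := by
    rw [hΦm, hΦ]
    simp [Polynomial.map_mul, Polynomial.map_pow, Polynomial.map_sub]
    rfl
  set Bp : ZMod d → Polynomial Ksep :=
    fun l => Polynomial.taylor (lam l) Φm with hBpdef
  have hBeval : ∀ (l : ZMod d) (w : Ksep), (Bp l).eval w = cm * (w + lam l - θ') ^ s := by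
    intro l w
    rw [hBpdef]
    simp only [Polynomial.taylor_eval, hΦm']
    simp only [Polynomial.eval_mul, Polynomial.eval_pow, Polynomial.eval_sub,
      Polynomial.eval_C, Polynomial.eval_X]
  -- the iterated product polynomials
  set Gp : ℕ → Polynomial Ksep := fun m =>
    Nat.rec (1 : Polynomial Ksep) (fun m' G => (Bp (L - (m' : ZMod d))).map (Fr m') * G) m
    with hGpdef
  have hGp0 : Gp 0 = 1 := rfl
  have hGpS : ∀ m, Gp (m + 1) = (Bp (L - (m : ZMod d))).map (Fr m) * Gp m := fun m => rfl
  -- power series bookkeeping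
  have hmk_mul : ∀ P Q : Polynomial Ksep,
      (PowerSeries.mk fun j => (P * Q).coeff j) =
        (PowerSeries.mk fun j => P.coeff j) * (PowerSeries.mk fun j => Q.coeff j) := by
    intro P Q
    ext i
    simp [PowerSeries.coeff_mk, PowerSeries.coeff_mul, Polynomial.coeff_mul]
  set F : ZMod d → PowerSeries Ksep := fun l => PowerSeries.mk (ψ l) with hFdef
  have hFrel : ∀ l : ZMod d,
      PowerSeries.map (Fr 1) (F (l - 1)) = (PowerSeries.mk fun j => (Bp l).coeff j) * F l := by
    intro l
    ext i
    rw [PowerSeries.coeff_map]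
    simp only [hFdef, PowerSeries.coeff_mk]
    rw [hFr, pow_one, hfrob l i, PowerSeries.coeff_mul,
      Finset.Nat.sum_antidiagonal_eq_sum_range_succ_mk]
    simp only [PowerSeries.coeff_mk, hBpdef]
  have hkey : ∀ m : ℕ, PowerSeries.map (Fr m) (F (L - (m : ZMod d))) =
      (PowerSeries.mk fun j => (Gp m).coeff j) * F L := by
    intro m
    induction m with
    | zero =>
      have h1 : (PowerSeries.mk fun j => (Gp 0).coeff j) = 1 := by
        ext i
        rw [hGp0]
        simp [PowerSeries.coeff_mk, PowerSeries.coeff_one, Polynomial.coeff_one]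
      rw [h1, one_mul]
      ext i
      rw [PowerSeries.coeff_map, hFr]
      simp
    | succ m ih =>
      have hcast : L - ((m + 1 : ℕ) : ZMod d) = (L - (m : ZMod d)) - 1 := by
        push_cast
        ring
      have hmapcomp : PowerSeries.map (Fr (m + 1)) (F (L - ((m + 1 : ℕ) : ZMod d))) =
          PowerSeries.map (Fr m) (PowerSeries.map (Fr 1) (F ((L - (m : ZMod d)) - 1))) := by
        rw [hcast]
        ext i
        rw [PowerSeries.coeff_map, PowerSeries.coeff_map, PowerSeries.coeff_map,
          hFr, hFr, hFr, ← pow_mul, pow_one]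
        rw [← pow_succ' q m]
      rw [hmapcomp, hFrel (L - (m : ZMod d)), map_mul, ih, ← mul_assoc]
      congr 1
      rw [hGpS, hmk_mul]
      congr 1
      ext i
      simp [PowerSeries.coeff_map, PowerSeries.coeff_mk, Polynomial.coeff_map]
  have hkeycoeff : ∀ n : ℕ, ((n : ZMod d) = 0) → ∀ i : ℕ,
      ψ L i ^ q ^ n = ∑ j ∈ Finset.range (i + 1), (Gp n).coeff j * ψ L (i - j) := by
    intro n hn i
    have h := hkey n
    rw [hn, sub_zero] at h
    have h2 := congrArg (PowerSeries.coeff i) h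
    rw [PowerSeries.coeff_map] at h2
    simp only [hFdef, PowerSeries.coeff_mk] at h2
    rw [hFr] at h2
    rw [h2, PowerSeries.coeff_mul, Finset.Nat.sum_antidiagonal_eq_sum_range_succ_mk]
    simp only [PowerSeries.coeff_mk]
  -- nonvanishing of the product polynomials at the special points
  set w : ℕ → Ksep := fun n => (θ' - lam L) ^ q ^ n with hwdef
  have heval : ∀ n : ℕ, ((n : ZMod d) = 0) → ∀ m, m ≤ n → (Gp m).eval (w n) ≠ 0 := by
    intro n hn m
    induction m with
    | zero =>
      intro _
      rw [hGp0]
      simp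
    | succ m ih =>
      intro hm
      have hm' : m ≤ n := le_trans (Nat.le_succ m) hm
      rw [hGpS, Polynomial.eval_mul]
      refine mul_ne_zero ?_ (ih hm')
      have hw : w n = Fr m (w (n - m)) := by
        rw [hFr]
        show (θ' - lam L) ^ q ^ n = ((θ' - lam L) ^ q ^ (n - m)) ^ q ^ m
        rw [← pow_mul, ← pow_add, Nat.sub_add_cancel hm']
      rw [hw, Polynomial.eval_map, Polynomial.eval₂_at_apply]
      intro hzero'
      have h0 : (Bp (L - (m : ZMod d))).eval (w (n - m)) = 0 :=
        (Fr m).injective (by rw [map_zero]; exact hzero')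
      rw [hBeval] at h0
      rcases mul_eq_zero.mp h0 with h | h
      · exact hcm0 h
      · obtain ⟨h1, -⟩ := pow_eq_zero_iff'.mp h
        have hwval : w (n - m) = θ' ^ q ^ (n - m) - lam (L - (m : ZMod d)) := by
          show (θ' - lam L) ^ q ^ (n - m) = _
          have hqp : q ^ (n - m) = p ^ ((k : ℕ) * (n - m)) := by rw [hq', pow_mul]
          have hsub : (θ' - lam L) ^ q ^ (n - m) =
              θ' ^ q ^ (n - m) - lam L ^ q ^ (n - m) := by
            rw [hqp, sub_pow_char_pow]
          rw [hsub, hlam_iter]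
          congr 2
          have hcast : ((n - m : ℕ) : ZMod d) = -(m : ZMod d) := by
            rw [Nat.cast_sub hm', hn, zero_sub]
          rw [hcast, sub_eq_add_neg]
        rw [hwval] at h1
        have h2 : θ' ^ q ^ (n - m) = θ' := by linear_combination h1
        exact hθe (n - m) (by omega) h2
  -- now work in the completion at L
  haveI : CharP (Cl L) p := charP_of_injective_ringHom (e L).injective p
  set E : Ksep →+* Cl L := e L with hEdef
  set a : ℕ → Cl L := fun i => E (ψ L i) with hadef
  set x₀ : Cl L := E θ' - E (lam L) with hx₀def
  set r : NNReal := Valued.v x₀ with hrdef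
  have hr0 : 0 < r := (hsmall L).1
  have hr1 : r < 1 := (hsmall L).2
  have hEw : ∀ n : ℕ, E (w n) = x₀ ^ q ^ n := by
    intro n; rw [hwdef]; simp [map_pow, map_sub, hx₀def]
  have hsum0 : HasSum (fun i => a i * x₀ ^ i) 0 := hzero L
  -- for each multiple of d, the series vanishes at the corresponding point
  have hA : ∀ ν : ℕ, HasSum (fun i => a i * (x₀ ^ q ^ (ν * d)) ^ i) 0 := by
    intro ν
    set n := ν * d with hndef
    have hn : ((n : ℕ) : ZMod d) = 0 := by
      rw [hndef]
      push_cast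
      simp [ZMod.natCast_self]
    have hqn : q ^ n = p ^ ((k : ℕ) * n) := by rw [hq', ← pow_mul]
    have h1 : HasSum (fun i => (a i * x₀ ^ i) ^ p ^ ((k : ℕ) * n)) 0 := by
      have h := aux_frob_hasSum p ((k : ℕ) * n) hsum0
      rwa [zero_pow (pow_ne_zero _ hpP.out.ne_zero)] at h
    have h2 : HasSum (fun i =>
        (∑ j ∈ Finset.range (i + 1), E ((Gp n).coeff j) * a (i - j)) * (x₀ ^ q ^ n) ^ i) 0 := by
      refine h1.congr_fun fun i => ?_
      rw [← hqn, mul_pow]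
      have ha : a i ^ q ^ n = ∑ j ∈ Finset.range (i + 1), E ((Gp n).coeff j) * a (i - j) := by
        rw [hadef]
        show E (ψ L i) ^ q ^ n = _
        rw [← map_pow, hkeycoeff n hn i, map_sum]
        refine Finset.sum_congr rfl fun j _ => ?_
        rw [map_mul]
      rw [ha, pow_right_comm]
    have hterm : Filter.Tendsto (fun i => a i * (x₀ ^ q ^ n) ^ i) Filter.atTop (nhds 0) := by
      rw [aux_tendsto_iff]
      have h0 : Filter.Tendsto (fun i => Valued.v (a i * x₀ ^ i)) Filter.atTop (nhds 0) :=
        aux_tendsto_iff.mp hsum0.summable.tendsto_atTop_zero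
      refine tendsto_of_tendsto_of_tendsto_of_le_of_le tendsto_const_nhds h0
        (fun i => zero_le) (fun i => ?_)
      rw [Valuation.map_mul, Valuation.map_mul]
      refine mul_le_mul_right ?_ _
      rw [Valuation.map_pow, Valuation.map_pow, Valuation.map_pow]
      refine pow_le_pow_left' ?_ i
      calc Valued.v x₀ ^ q ^ n ≤ Valued.v x₀ ^ 1 :=
            pow_le_pow_right_of_le_one' hr1.le (Nat.one_le_pow _ _ (by omega))
        _ = Valued.v x₀ := pow_one _
    obtain ⟨T, hT⟩ := aux_summable hterm
    have h3 := aux_mulpoly (fun j => E ((Gp n).coeff j)) (Gp n).natDegree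
      (fun j hj => by
        show E ((Gp n).coeff j) = 0
        rw [Polynomial.coeff_eq_zero_of_natDegree_lt hj, map_zero])
      a (x₀ ^ q ^ n) T hT
    have h4 : (∑ j ∈ Finset.range ((Gp n).natDegree + 1),
        E ((Gp n).coeff j) * (x₀ ^ q ^ n) ^ j) * T = 0 := h3.unique h2
    have hP : (∑ j ∈ Finset.range ((Gp n).natDegree + 1),
        E ((Gp n).coeff j) * (x₀ ^ q ^ n) ^ j) = E ((Gp n).eval (w n)) := by
      rw [Polynomial.eval_eq_sum_range, map_sum]
      refine Finset.sum_congr rfl fun j _ => ?_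
      rw [map_mul, map_pow, hEw]
    have hP0 : (∑ j ∈ Finset.range ((Gp n).natDegree + 1),
        E ((Gp n).coeff j) * (x₀ ^ q ^ n) ^ j) ≠ 0 := by
      rw [hP]
      intro h
      exact heval n hn n le_rfl (E.injective (by rw [map_zero]; exact h))
    have hT0 : T = 0 := by
      rcases mul_eq_zero.mp h4 with h | h
      · exact absurd h hP0
      · exact h
    rw [hT0] at hT
    exact hT
  -- the endgame: infinitely many zeros force all coefficients to vanish
  have hazero : ∀ i, a i = 0 := by
    by_contra hcon
    push_neg at hcon
    have hex : ∃ i, a i ≠ 0 := hcon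
    set i₀ := Nat.find hex with hi₀def
    have hi₀ : a i₀ ≠ 0 := Nat.find_spec hex
    have hmin : ∀ i, i < i₀ → a i = 0 := by
      intro i hi
      by_contra hne
      exact (Nat.find_min hex hi) hne
    have hv0 : Filter.Tendsto (fun i => Valued.v (a i * x₀ ^ i)) Filter.atTop (nhds 0) :=
      aux_tendsto_iff.mp hsum0.summable.tendsto_atTop_zero
    obtain ⟨I, hI⟩ := Filter.eventually_atTop.mp
      (hv0.eventually_lt_const (by norm_num : (0 : NNReal) < 1))
    set M : NNReal := max 1 ((Finset.range I).sup fun i => Valued.v (a i * x₀ ^ i)) with hMdef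
    have hM : ∀ i, Valued.v (a i * x₀ ^ i) ≤ M := by
      intro i
      rcases lt_or_ge i I with h | h
      · exact le_max_of_le_right (Finset.le_sup (f := fun i => Valued.v (a i * x₀ ^ i)) (Finset.mem_range.mpr h))
      · exact le_max_of_le_left (hI i h).le
    set V : NNReal := Valued.v (a i₀) * r ^ i₀ with hVdef
    have hV0 : 0 < V := by
      refine mul_pos ?_ (pow_pos hr0 i₀)
      rw [pos_iff_ne_zero]
      exact (Valuation.ne_zero_iff _).mpr hi₀
    have htendM : Filter.Tendsto (fun m : ℕ => M * r ^ m) Filter.atTop (nhds 0) := by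
      have h := NNReal.tendsto_pow_atTop_nhds_zero_of_lt_one hr1
      have h2 := h.const_mul M
      simpa using h2
    obtain ⟨n₀, hn₀⟩ := Filter.eventually_atTop.mp (htendM.eventually_lt_const hV0)
    set Q := q ^ (n₀ * d) with hQdef
    have hQ1 : n₀ + 1 ≤ Q := by
      calc n₀ + 1 ≤ 2 ^ n₀ := Nat.lt_two_pow_self
        _ ≤ 2 ^ (n₀ * d) := Nat.pow_le_pow_right (by norm_num)
            (Nat.le_mul_of_pos_right _ (Nat.pos_of_ne_zero (NeZero.ne d)))
        _ ≤ q ^ (n₀ * d) := Nat.pow_le_pow_left hq2 _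
    have hQpos : 1 ≤ Q := by omega
    have hz : HasSum (fun i => a i * (x₀ ^ Q) ^ i) 0 := hA n₀
    have hrQ : M * r ^ (Q - 1) < V := by
      have hle : r ^ (Q - 1) ≤ r ^ n₀ := pow_le_pow_right_of_le_one' hr1.le (by omega)
      exact lt_of_le_of_lt (mul_le_mul_right hle M) (hn₀ n₀ le_rfl)
    have hvz : ∀ i : ℕ, Valued.v (a i * (x₀ ^ Q) ^ i) =
        Valued.v (a i * x₀ ^ i) * r ^ ((Q - 1) * i) := by
      intro i
      have hexp : Q * i = i + (Q - 1) * i := by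
        have h' : 1 + (Q - 1) = Q := by omega
        calc Q * i = (1 + (Q - 1)) * i := by rw [h']
          _ = i + (Q - 1) * i := by rw [add_mul, one_mul]
      rw [Valuation.map_mul, Valuation.map_mul, Valuation.map_pow, Valuation.map_pow,
        Valuation.map_pow, ← pow_mul, hexp, pow_add]
      rw [hrdef, mul_assoc]
    have htail : ∀ i : ℕ, i₀ + 1 ≤ i →
        Valued.v (a i * (x₀ ^ Q) ^ i) ≤ M * r ^ ((Q - 1) * (i₀ + 1)) := by
      intro i hi
      rw [hvz i]
      calc Valued.v (a i * x₀ ^ i) * r ^ ((Q - 1) * i) ≤ M * r ^ ((Q - 1) * i) :=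
            mul_le_mul_left (hM i) _
        _ ≤ M * r ^ ((Q - 1) * (i₀ + 1)) := mul_le_mul_right
            (pow_le_pow_right_of_le_one' hr1.le (Nat.mul_le_mul_left _ hi)) M
    have hBV : M * r ^ ((Q - 1) * (i₀ + 1)) < Valued.v (a i₀ * (x₀ ^ Q) ^ i₀) := by
      have hval : Valued.v (a i₀ * (x₀ ^ Q) ^ i₀) = V * r ^ ((Q - 1) * i₀) := by
        rw [hvz i₀, hVdef]
        rw [Valuation.map_mul, Valuation.map_pow, hrdef]
      rw [hval]
      have hsplitexp : (Q - 1) * (i₀ + 1) = (Q - 1) * i₀ + (Q - 1) := by ring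
      rw [hsplitexp, pow_add, ← mul_assoc]
      calc M * r ^ ((Q - 1) * i₀) * r ^ (Q - 1)
          = M * r ^ (Q - 1) * r ^ ((Q - 1) * i₀) := mul_right_comm M _ _
        _ < V * r ^ ((Q - 1) * i₀) := mul_lt_mul_of_pos_right hrQ (pow_pos hr0 _)
    have hsplit : HasSum (fun i => a (i + (i₀ + 1)) * (x₀ ^ Q) ^ (i + (i₀ + 1)))
        (-(∑ i ∈ Finset.range (i₀ + 1), a i * (x₀ ^ Q) ^ i)) := by
      refine (hasSum_nat_add_iff (f := fun i => a i * (x₀ ^ Q) ^ i) (i₀ + 1)).mpr ?_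
      rw [neg_add_cancel]
      exact hz
    have hfin : ∑ i ∈ Finset.range (i₀ + 1), a i * (x₀ ^ Q) ^ i = a i₀ * (x₀ ^ Q) ^ i₀ := by
      rw [Finset.sum_range_succ, Finset.sum_eq_zero, zero_add]
      intro i hi
      rw [hmin i (Finset.mem_range.mp hi), zero_mul]
    rw [hfin] at hsplit
    have hle := aux_val_le_of_hasSum hsplit (fun i => htail (i + (i₀ + 1)) (by omega))
    rw [Valuation.map_neg] at hle
    exact absurd hle (not_le.mpr hBV)
  intro i
  have := hazero i
  rw [hadef] at this
  exact E.injective (by simpa using this)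

end
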